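/- arXiv:1805.00301 — 2 statements merged into one kernel-verified Lean document; each statement's English description precedes it below -/
import Mathlib

section
/- For a finite abelian group G, the number of cyclic subgroups of the generalized dihedral group D(G) equals |L1(G)| + |G|. -/
lemma isCyclic_zpowers' {H : Type*} [Group H] (g : H) : IsCyclic (Subgroup.zpowers g) := by
  refine ⟨⟨⟨g, Subgroup.mem_zpowers g⟩, ?_⟩⟩
  rintro ⟨x, n, rfl⟩
  exact ⟨n, by ext; push_cast; rfl⟩

/-- `H` is the generalized dihedral group `D(G)`: `G` is an abelian subgroup of index 2
and `y ∉ G` is an involution inverting `G` by conjugation. -/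
theorem stmt_17 (H : Type*) [Group H] [Finite H] (G : Subgroup H)
    (hG : IsMulCommutative G) (hGindex : G.index = 2) (y : H) (hyG : y ∉ G)
    (hy2 : y ^ 2 = 1) (hconj : ∀ g ∈ G, y * g * y = g⁻¹) :
    Nat.card {K : Subgroup H // IsCyclic K} =
      Nat.card {K : Subgroup G // IsCyclic K} + Nat.card G := by
  classical
  have hyinv : y⁻¹ = y := by
    rw [inv_eq_iff_mul_eq_one, ← sq, hy2]
  obtain ⟨a, ha⟩ := Subgroup.index_eq_two_iff.mp hGindex
  -- every element outside G, multiplied by y, lands in G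
  have key : ∀ h : H, h ∉ G → h * y ∈ G := by
    intro h hh
    have hya : y * a ∈ G := by
      rcases ha y with h1 | h1
      · exact h1.1
      · exact absurd h1.1 hyG
    have hha : h * a ∈ G := by
      rcases ha h with h1 | h1
      · exact h1.1
      · exact absurd h1.1 hh
    have hmem : (h * a) * (y * a)⁻¹ ∈ G := G.mul_mem hha (G.inv_mem hya)
    have e : (h * a) * (y * a)⁻¹ = h * y⁻¹ := by group
    rwa [e, hyinv] at hmem
  -- every element outside G squares to 1
  have hord : ∀ h : H, h ∉ G → h * h = 1 := by
    intro h hh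
    have hg : h * y ∈ G := key h hh
    calc h * h = h * y ^ 2 * h * y ^ 2 := by rw [hy2, mul_one, mul_one]
      _ = (h * y) * (y * (h * y) * y) := by rw [sq]; group
      _ = (h * y) * (h * y)⁻¹ := by rw [hconj _ hg]
      _ = 1 := by group
  -- zpowers of an element outside G has exactly two elements
  have hzpow : ∀ h : H, h ∉ G → ∀ x : H, x ∈ Subgroup.zpowers h ↔ (x = 1 ∨ x = h) := by
    intro h hh x
    have h2 : h ^ (2 : ℕ) = 1 := by rw [pow_two]; exact hord h hh
    have hinv : h⁻¹ = h := inv_eq_of_mul_eq_one_right (hord h hh)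
    have key2 : ∀ m : ℕ, h ^ m = 1 ∨ h ^ m = h := by
      intro m
      have hm : h ^ m = h ^ (m % 2) := by
        conv_lhs => rw [← Nat.div_add_mod m 2]
        rw [pow_add, pow_mul, h2, one_pow, one_mul]
      rcases Nat.mod_two_eq_zero_or_one m with h1 | h1 <;> rw [hm, h1] <;> simp
    constructor
    · rintro ⟨n, rfl⟩
      show h ^ n = 1 ∨ h ^ n = h
      rcases n.natAbs_eq with he | he
      · rw [he, zpow_natCast]; exact key2 _
      · rw [he, zpow_neg, zpow_natCast]
        rcases key2 n.natAbs with h1 | h1 <;> rw [h1] <;> simp [hinv]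
    · rintro (rfl | rfl)
      · exact Subgroup.one_mem _
      · exact Subgroup.mem_zpowers _
  -- cyclic subgroups are zpowers
  have gen : ∀ K : Subgroup H, IsCyclic K → ∃ z : H, z ∈ K ∧ K = Subgroup.zpowers z := by
    intro K hK
    obtain ⟨⟨z, hzK⟩, hz⟩ := hK.exists_generator
    refine ⟨z, hzK, le_antisymm ?_ ?_⟩
    · intro x hx
      obtain ⟨n, hn⟩ := hz ⟨x, hx⟩
      refine ⟨n, ?_⟩
      show z ^ n = x
      have := congrArg Subtype.val hn
      simpa using this
    · rintro x ⟨n, rfl⟩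
      exact K.zpow_mem hzK n
  -- split the count by whether K ≤ G
  have e := (Equiv.sumCompl (fun x : {K : Subgroup H // IsCyclic K} => x.1 ≤ G)).symm
  rw [Nat.card_congr e, Nat.card_sum]
  congr 1
  · -- cyclic subgroups contained in G ↔ cyclic subgroups of G
    symm
    apply Nat.card_eq_of_bijective
      (f := fun K : {K : Subgroup G // IsCyclic K} =>
        (⟨⟨K.1.map G.subtype, by
            haveI := K.2
            exact isCyclic_of_surjective
              (Subgroup.equivMapOfInjective K.1 G.subtype G.subtype_injective).toMonoidHom
              (Subgroup.equivMapOfInjective K.1 G.subtype G.subtype_injective).surjective⟩,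
          Subgroup.map_subtype_le K.1⟩ :
          {x : {K : Subgroup H // IsCyclic K} // x.1 ≤ G}))
    constructor
    · intro K1 K2 h12
      have := congrArg (fun x => x.1.1) h12
      simp only at this
      exact Subtype.ext (Subgroup.map_injective G.subtype_injective this)
    · rintro ⟨⟨K, hK⟩, hle⟩
      refine ⟨⟨K.subgroupOf G, ?_⟩, ?_⟩
      · haveI := hK
        exact isCyclic_of_surjective
          (Subgroup.subgroupOfEquivOfLe hle).symm.toMonoidHom
          (Subgroup.subgroupOfEquivOfLe hle).symm.surjective
      · apply Subtype.ext
        apply Subtype.ext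
        simp only
        rw [Subgroup.subgroupOf_map_subtype, inf_eq_left.mpr hle]
  · -- cyclic subgroups not contained in G ↔ elements of G
    have hout : ∀ g : G, (g : H) * y ∉ G := by
      intro g hmem
      exact hyG (by simpa using G.mul_mem (G.inv_mem g.2) hmem)
    symm
    apply Nat.card_eq_of_bijective
      (f := fun g : G =>
        (⟨⟨Subgroup.zpowers ((g : H) * y), isCyclic_zpowers' _⟩, by
            intro hle
            exact hout g (hle (Subgroup.mem_zpowers _))⟩ :
          {x : {K : Subgroup H // IsCyclic K} // ¬ x.1 ≤ G}))
    constructor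
    · intro g1 g2 h12
      have heq : Subgroup.zpowers ((g1 : H) * y) = Subgroup.zpowers ((g2 : H) * y) := by
        have := congrArg (fun x => x.1.1) h12
        simpa using this
      have hmem : (g2 : H) * y ∈ Subgroup.zpowers ((g1 : H) * y) := by
        rw [heq]; exact Subgroup.mem_zpowers _
      rcases (hzpow _ (hout g1) _).mp hmem with h1 | h1
      · exact absurd (h1 ▸ G.one_mem) (hout g2)
      · have h2 := mul_right_cancel h1
        exact Subtype.ext (by exact_mod_cast h2.symm)
    · rintro ⟨⟨K, hK⟩, hnle⟩
      obtain ⟨z, hzK, rfl⟩ := gen K hK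
      have hz : z ∉ G := fun h => hnle (Subgroup.zpowers_le.mpr h)
      refine ⟨⟨z * y, key z hz⟩, ?_⟩
      apply Subtype.ext
      apply Subtype.ext
      simp only
      congr 1
      rw [mul_assoc, ← sq, hy2, mul_one]
end

section
/- Among all finite non-abelian 2-groups possessing a cyclic maximal subgroup (i.e., groups isomorphic to M(2^n) for n ≥ 4, D_{2^n} for n ≥ 3, Q_{2^n} for n ≥ 3, or S_{2^n} for n ≥ 4), the dihedral group D_16 of order 16 is the only one with α(G) = 3/4. -/
open Subgroup

section Helpers

variable {G : Type*} [Group G]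

lemma isCyclic_zpowers'_s19 (g : G) : IsCyclic (zpowers g) := by
  refine ⟨⟨g, mem_zpowers g⟩, fun x => ?_⟩
  obtain ⟨z, hz⟩ := x.2
  exact ⟨z, Subtype.ext (by simpa using hz)⟩

lemma IsCyclic.exists_gen' {K : Subgroup G} (h : IsCyclic K) : ∃ g : G, K = zpowers g := by
  obtain ⟨⟨g, hgK⟩, hg⟩ := h
  refine ⟨g, le_antisymm (fun x hx => ?_) (zpowers_le.mpr hgK)⟩
  obtain ⟨z, hz⟩ := hg ⟨x, hx⟩
  exact ⟨z, congrArg Subtype.val hz⟩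

lemma Subgroup.eq_of_le_of_card_le' [Finite G] {K K' : Subgroup G} (h : K ≤ K')
    (hc : Nat.card K' ≤ Nat.card K) : K = K' := by
  apply SetLike.ext'
  apply Set.eq_of_subset_of_ncard_le h
  rwa [← Nat.card_coe_set_eq, ← Nat.card_coe_set_eq]

lemma mem_zpowers_sq {x y : G} (hx : x * x = 1) (h : y ∈ zpowers x) : y = 1 ∨ y = x := by
  obtain ⟨z, rfl⟩ := h
  have hx2 : x ^ (2 : ℤ) = 1 := by rw [show (2:ℤ) = 1 + 1 by norm_num, zpow_add, zpow_one, hx]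
  have : x ^ z = x ^ (z % 2) := by
    conv_lhs => rw [← Int.emod_add_mul_ediv z 2, zpow_add, zpow_mul, hx2, one_zpow, mul_one]
  rcases Int.emod_two_eq z with h2 | h2 <;> [left; right] <;>
    simp only [] <;> rw [this, h2] <;> simp

lemma zpow_congr_mod {a : G} {M : ℕ} (hM : a ^ M = 1) {u v : ℤ}
    (h : (M : ℤ) ∣ u - v) : a ^ u = a ^ v := by
  obtain ⟨c, hc⟩ := h
  have : u = v + M * c := by linarith
  rw [this, zpow_add, zpow_mul, zpow_natCast, hM, one_zpow, mul_one]

lemma cyclic_sub_classify [Finite G] {a : G} {m : ℕ} (ha : orderOf a = 2 ^ m)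
    {K : Subgroup G} (hc : IsCyclic K) (hK : K ≤ zpowers a) :
    ∃ j ≤ m, K = zpowers (a ^ (2 ^ j : ℕ)) := by
  obtain ⟨g, rfl⟩ := hc.exists_gen'
  obtain ⟨z, hz⟩ := hK (mem_zpowers g)
  simp only [] at hz
  have hM : a ^ (2 ^ m : ℕ) = 1 := by rw [← ha]; exact pow_orderOf_eq_one a
  have hdvd : orderOf g ∣ 2 ^ m := by
    apply orderOf_dvd_of_pow_eq_one
    rw [← hz, ← zpow_natCast, ← zpow_mul, mul_comm, zpow_mul, zpow_natCast, hM, one_zpow]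
  obtain ⟨i, him, hi⟩ := (Nat.dvd_prime_pow Nat.prime_two).mp hdvd
  refine ⟨m - i, Nat.sub_le m i, ?_⟩
  have hle : zpowers g ≤ zpowers (a ^ (2 ^ (m - i) : ℕ)) := by
    rw [zpowers_le]
    have h1 : a ^ (z * 2 ^ i) = 1 := by
      rw [zpow_mul, hz]
      have hcast : ((2:ℤ)^i) = ((2^i : ℕ) : ℤ) := by push_cast; ring
      rw [hcast, zpow_natCast, ← hi, pow_orderOf_eq_one]
    have h2 : ((2:ℤ) ^ m) ∣ z * 2 ^ i := by
      have := orderOf_dvd_iff_zpow_eq_one.mpr h1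
      rw [ha] at this
      exact_mod_cast this
    have h3 : ((2:ℤ) ^ (m - i)) ∣ z := by
      have hmi : (2:ℤ) ^ m = 2 ^ (m - i) * 2 ^ i := by
        rw [← pow_add]; congr 1; omega
      rw [hmi] at h2
      have h2i : (2:ℤ) ^ i ≠ 0 := by positivity
      exact (mul_dvd_mul_iff_right h2i).mp (by rwa [mul_comm z] at h2 ⊢)
    obtain ⟨w, hw⟩ := h3
    refine ⟨w, ?_⟩
    show (a ^ (2 ^ (m - i) : ℕ)) ^ w = g
    rw [← hz, hw, ← zpow_natCast a (2 ^ (m-i)), ← zpow_mul]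
    congr 1
  have hcards : Nat.card (zpowers (a ^ (2 ^ (m - i) : ℕ))) ≤ Nat.card (zpowers g) := by
    rw [Nat.card_zpowers, Nat.card_zpowers, orderOf_pow, ha, hi]
    have hg : Nat.gcd (2 ^ m) (2 ^ (m - i)) = 2 ^ (m - i) :=
      Nat.gcd_eq_right (pow_dvd_pow 2 (by omega))
    rw [hg, Nat.pow_div (by omega) (by norm_num)]
    have : m - (m - i) = i := by omega
    rw [this]
  exact Subgroup.eq_of_le_of_card_le' hle hcards

lemma outside_rep {a t : G} (hidx : (zpowers a).index = 2) {m : ℕ}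
    (ho : orderOf a = 2 ^ m) (ht : t ∉ zpowers a) {g : G} (hg : g ∉ zpowers a) :
    ∃ i : ℕ, i < 2 ^ m ∧ g = a ^ i * t := by
  have hM : a ^ (2 ^ m : ℕ) = 1 := by rw [← ho]; exact pow_orderOf_eq_one a
  have hmem : g * t⁻¹ ∈ zpowers a := by
    rw [Subgroup.mul_mem_iff_of_index_two hidx]
    simp only [inv_mem_iff]
    tauto
  obtain ⟨z, hz⟩ := hmem
  simp only [] at hz
  have h2m : (0:ℤ) < 2 ^ m := by positivity
  have hc0 : ((2^m : ℕ) : ℤ) = (2:ℤ)^m := by push_cast; ring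
  refine ⟨(z % 2 ^ m).toNat, ?_, ?_⟩
  · have h4 := Int.emod_lt_of_pos z h2m
    have h5 := Int.emod_nonneg z (by positivity : (2:ℤ) ^ m ≠ 0)
    omega
  · have h1 : a ^ z = a ^ (((z % 2 ^ m).toNat : ℕ) : ℤ) := by
      apply zpow_congr_mod hM
      rw [Int.toNat_of_nonneg (Int.emod_nonneg z (by positivity))]
      push_cast
      exact Int.dvd_self_sub_of_emod_eq rfl
    rw [h1, zpow_natCast] at hz
    rw [hz]
    group

lemma count_le_general [Finite G] {a t : G} {m N : ℕ}
    (hidx : (zpowers a).index = 2) (ho : orderOf a = 2 ^ m) (ht : t ∉ zpowers a)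
    (u : Fin N → ℕ)
    (hcover : ∀ i : ℕ, i < 2 ^ m →
      ∃ x : Fin N, zpowers (a ^ u x * t) = zpowers (a ^ i * t)) :
    Nat.card {K : Subgroup G // IsCyclic K} ≤ (m + 1) + N := by
  classical
  set ψ : Fin (m+1) ⊕ Fin N → {K : Subgroup G // IsCyclic K} :=
    fun p => match p with
      | .inl j => ⟨zpowers (a ^ (2 ^ (j:ℕ) : ℕ)), isCyclic_zpowers'_s19 _⟩
      | .inr x => ⟨zpowers (a ^ u x * t), isCyclic_zpowers'_s19 _⟩ with hψ
  have hsurj : Function.Surjective ψ := by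
    rintro ⟨K, hK⟩
    by_cases hKH : K ≤ zpowers a
    · obtain ⟨j, hj, hKj⟩ := cyclic_sub_classify ho hK hKH
      exact ⟨.inl ⟨j, by omega⟩, Subtype.ext hKj.symm⟩
    · obtain ⟨g, rfl⟩ := hK.exists_gen'
      have hg : g ∉ zpowers a := fun h => hKH (zpowers_le.mpr h)
      obtain ⟨i, hi, rfl⟩ := outside_rep hidx ho ht hg
      obtain ⟨x, hx⟩ := hcover i hi
      exact ⟨.inr x, Subtype.ext hx⟩
  calc Nat.card {K : Subgroup G // IsCyclic K} ≤ Nat.card (Fin (m+1) ⊕ Fin N) :=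
        Nat.card_le_card_of_surjective ψ hsurj
  _ = (m+1) + N := by simp


lemma mem_zpowers_rep {G : Type*} [Group G] {a g : G} {M : ℕ} (hM : a ^ M = 1) (hMpos : 0 < M)
    (hg : g ∈ Subgroup.zpowers a) : ∃ i : ℕ, i < M ∧ g = a ^ i := by
  obtain ⟨z, hz⟩ := hg
  simp only [] at hz
  have h2m : (0:ℤ) < (M:ℤ) := by exact_mod_cast hMpos
  have hc0 : ((M : ℕ) : ℤ) = (M:ℤ) := rfl
  refine ⟨(z % M).toNat, ?_, ?_⟩
  · have h4 := Int.emod_lt_of_pos z h2m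
    have h5 := Int.emod_nonneg z (by omega : (M:ℤ) ≠ 0)
    omega
  · have h1 : a ^ z = a ^ (((z % M).toNat : ℕ) : ℤ) := by
      apply zpow_congr_mod hM
      rw [Int.toNat_of_nonneg (Int.emod_nonneg z (by omega))]
      exact Int.dvd_self_sub_of_emod_eq rfl
    rw [h1, zpow_natCast] at hz
    exact hz.symm

lemma conj_pow_eq {G : Type*} [Group G] {a t : G} {k : ℕ} (h : t * a * t⁻¹ = a ^ k) (j : ℕ) :
    t * a ^ j = a ^ (k * j) * t := by
  have h1 : t * a ^ j * t⁻¹ = (t * a * t⁻¹) ^ j := by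
    induction j with
    | zero => simp
    | succ q ih => rw [pow_succ, pow_succ, ← ih]; group
  rw [h, ← pow_mul] at h1
  calc t * a ^ j = (t * a ^ j * t⁻¹) * t := by group
  _ = a ^ (k * j) * t := by rw [h1]

lemma prod_formula {G : Type*} [Group G] {a t : G} {k s : ℕ}
    (hk : t * a * t⁻¹ = a ^ k) (hs : t * t = a ^ s) (i j : ℕ) :
    (a ^ i * t) * (a ^ j * t) = a ^ (i + k * j + s) := by
  have h := conj_pow_eq hk j
  calc (a ^ i * t) * (a ^ j * t) = a ^ i * (t * a ^ j) * t := by group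
  _ = a ^ i * (a ^ (k * j) * t) * t := by rw [h]
  _ = a ^ i * a ^ (k * j) * (t * t) := by group
  _ = a ^ i * a ^ (k * j) * a ^ s := by rw [hs]
  _ = a ^ (i + k * j + s) := by rw [← pow_add, ← pow_add]

lemma mix_formula {G : Type*} [Group G] {a t : G} {k : ℕ}
    (hk : t * a * t⁻¹ = a ^ k) (i j : ℕ) :
    (a ^ i * t) * a ^ j = a ^ (i + k * j) * t := by
  have h := conj_pow_eq hk j
  calc (a ^ i * t) * a ^ j = a ^ i * (t * a ^ j) := by group
  _ = a ^ i * (a ^ (k * j) * t) := by rw [h]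
  _ = a ^ (i + k * j) * t := by rw [← mul_assoc, ← pow_add]

lemma abelian_contra {G : Type*} [Group G] {a t : G}
    (hidx : (Subgroup.zpowers a).index = 2) (ht : t ∉ Subgroup.zpowers a)
    (hcomm : t * a = a * t) : ∀ x y : G, x * y = y * x := by
  have hrep : ∀ g : G, (∃ z : ℤ, g = a ^ z) ∨ (∃ z : ℤ, g = a ^ z * t) := by
    intro g
    by_cases hg : g ∈ Subgroup.zpowers a
    · left
      obtain ⟨z, hz⟩ := hg
      exact ⟨z, hz.symm⟩
    · right
      have htinv : t⁻¹ ∉ Subgroup.zpowers a := by simpa [inv_mem_iff] using ht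
      have hmem : g * t⁻¹ ∈ Subgroup.zpowers a := by
        rw [Subgroup.mul_mem_iff_of_index_two hidx]
        tauto
      obtain ⟨z, hz⟩ := hmem
      simp only [] at hz
      exact ⟨z, by rw [hz]; group⟩
  have hCta : Commute t a := hcomm
  have key : ∀ z : ℤ, Commute (a ^ z) t := fun z => (hCta.symm.zpow_left z)
  have key2 : ∀ z w : ℤ, Commute (a ^ z) (a ^ w) := fun z w => (Commute.refl a).zpow_zpow z w
  intro x y
  rcases hrep x with ⟨z, rfl⟩ | ⟨z, rfl⟩ <;> rcases hrep y with ⟨w, rfl⟩ | ⟨w, rfl⟩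
  · exact (key2 z w).eq
  · exact ((key2 z w).mul_right (key z)).eq
  · exact (((key2 z w)).mul_left ((key w).symm)).eq
  · exact (((key2 z w).mul_left ((key w).symm)).mul_right ((key z).mul_left (Commute.refl t))).eq

lemma aux_pow (p : ℕ) (hp : 2 ≤ p) : p + 2 ≤ 2 ^ p := by
  induction p with
  | zero => omega
  | succ q ih =>
    rcases Nat.lt_or_ge q 2 with h | h
    · interval_cases q
      · omega
      · norm_num
    · have := ih h
      have : 2 ^ (q + 1) = 2 * 2 ^ q := by ring
      omega

end Helpers

/-- `α(G) = |L₁(G)| / |G|`, where `L₁(G)` is the set of cyclic subgroups of `G`. -/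
noncomputable def alpha (G : Type*) [Group G] : ℚ :=
  (Nat.card {H : Subgroup G // IsCyclic H} : ℚ) / (Nat.card G : ℚ)

section Alpha

variable {G H : Type*} [Group G] [Group H]

lemma isCyclic_map_iff (e : G ≃* H) (K : Subgroup G) :
    IsCyclic K ↔ IsCyclic (K.map e.toMonoidHom) := by
  constructor
  · intro h
    exact isCyclic_of_surjective (e.toMonoidHom.subgroupMap K)
      (e.toMonoidHom.subgroupMap_surjective K)
  · intro h
    have e2 : K ≃* K.map e.toMonoidHom := K.equivMapOfInjective e.toMonoidHom e.injective
    exact isCyclic_of_surjective e2.symm.toMonoidHom e2.symm.surjective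

noncomputable def cycEquiv (e : G ≃* H) :
    {K : Subgroup G // IsCyclic K} ≃ {K : Subgroup H // IsCyclic K} :=
  Equiv.subtypeEquiv e.mapSubgroup.toEquiv (fun K => isCyclic_map_iff e K)

lemma alpha_congr (e : G ≃* H) : alpha G = alpha H := by
  unfold alpha
  rw [Nat.card_congr e.toEquiv, Nat.card_congr (cycEquiv e)]

end Alpha

section D16

lemma zpowers_eq_filter (g : DihedralGroup 8) :
    (zpowers g : Set (DihedralGroup 8)) =
      ↑(Finset.univ.filter (fun x => ∃ m, m < 16 ∧ g ^ m = x)) := by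
  ext x
  simp only [Finset.coe_filter, Set.mem_setOf_eq, Finset.mem_univ, true_and, SetLike.mem_coe]
  constructor
  · intro hx
    obtain ⟨mm, rfl⟩ := mem_powers_iff_mem_zpowers.mpr hx
    refine ⟨mm % orderOf g, ?_, ?_⟩
    · have h1 : mm % orderOf g < orderOf g := Nat.mod_lt _ (orderOf_pos g)
      have h2 : orderOf g ≤ 16 := by
        have := orderOf_le_card_univ (x := g)
        rwa [DihedralGroup.card] at this
      omega
    · exact pow_mod_orderOf ..
  · rintro ⟨mm, _, rfl⟩
    exact mem_powers_iff_mem_zpowers.mp ⟨mm, rfl⟩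

lemma card_cyclic_D16 : Nat.card {K : Subgroup (DihedralGroup 8) // IsCyclic K} = 12 := by
  classical
  set F : DihedralGroup 8 → Finset (DihedralGroup 8) :=
    fun g => Finset.univ.filter (fun x => ∃ m, m < 16 ∧ g ^ m = x) with hF
  have hFz : ∀ g : DihedralGroup 8, (zpowers g : Set (DihedralGroup 8)) = ↑(F g) :=
    zpowers_eq_filter
  set f : {K : Subgroup (DihedralGroup 8) // IsCyclic K} → ↥(Finset.univ.image F) :=
    fun K => ⟨F K.2.exists_gen'.choose, Finset.mem_image_of_mem F (Finset.mem_univ _)⟩ with hf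
  have hfK : ∀ K : {K : Subgroup (DihedralGroup 8) // IsCyclic K},
      (K.1 : Set (DihedralGroup 8)) = ↑(F K.2.exists_gen'.choose) := by
    intro K
    rw [← hFz, ← K.2.exists_gen'.choose_spec]
  have hbij : Function.Bijective f := by
    constructor
    · intro K1 K2 h
      apply Subtype.ext
      apply SetLike.ext'
      rw [hfK K1, hfK K2]
      simpa [hf] using h
    · rintro ⟨s, hs⟩
      obtain ⟨g, -, rfl⟩ := Finset.mem_image.mp hs
      refine ⟨⟨zpowers g, isCyclic_zpowers'_s19 g⟩, ?_⟩
      apply Subtype.ext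
      show F _ = F g
      apply Finset.coe_injective
      rw [← hfK ⟨zpowers g, isCyclic_zpowers'_s19 g⟩, hFz]
  rw [Nat.card_eq_of_bijective f hbij]
  rw [Nat.card_eq_fintype_card, Fintype.card_coe]
  show (Finset.univ.image
    (fun g : DihedralGroup 8 => Finset.univ.filter (fun x => ∃ m, m < 16 ∧ g ^ m = x))).card = 12
  decide

lemma alpha_D16 : alpha (DihedralGroup 8) = 3 / 4 := by
  unfold alpha
  rw [card_cyclic_D16, DihedralGroup.nat_card]
  norm_num

end D16

section IsoD16

lemma iso_D16 {G : Type*} [Group G] [Finite G] {a t : G}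
    (hcard : Nat.card G = 16) (hidx : (Subgroup.zpowers a).index = 2)
    (horder : orderOf a = 8) (ht : t ∉ Subgroup.zpowers a)
    (hk : t * a * t⁻¹ = a ^ (7:ℕ)) (hst : t * t = 1) :
    Nonempty (G ≃* DihedralGroup 8) := by
  have hM : a ^ (8:ℕ) = 1 := by rw [← horder]; exact pow_orderOf_eq_one a
  have hcast : ∀ u v : ℤ, ((u : ZMod 8) = (v : ZMod 8)) → a ^ u = a ^ v := by
    intro u v h
    apply zpow_congr_mod hM
    have h2 := (ZMod.intCast_eq_intCast_iff u v 8).mp h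
    exact_mod_cast h2.symm.dvd
  have hta : ∀ z : ℤ, t * a ^ z = a ^ (-z) * t := by
    intro z
    have h7 : a ^ (7:ℕ) = a ^ (-1:ℤ) := by
      rw [← zpow_natCast]; exact hcast 7 (-1) (by decide)
    have h1 : t * a ^ z * t⁻¹ = a ^ (-z) := by
      have h2 : (MulAut.conj t) (a ^ z) = ((MulAut.conj t) a) ^ z := map_zpow _ _ _
      simp only [MulAut.conj_apply] at h2
      rw [h2, hk, h7, ← zpow_mul]
      congr 1
      ring
    calc t * a ^ z = (t * a ^ z * t⁻¹) * t := by group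
    _ = a ^ (-z) * t := by rw [h1]
  set pz : ZMod 8 → G := fun i => a ^ ((i.val : ℤ)) with hpz
  have hzmod : ∀ i : ZMod 8, (((i.val : ℤ) : ZMod 8)) = i := by
    intro i
    push_cast [ZMod.natCast_val, ZMod.cast_id]
    ring
  have hadd : ∀ i j : ZMod 8, pz (i + j) = pz i * pz j := by
    intro i j
    rw [hpz]
    simp only []
    rw [← zpow_add]
    exact hcast _ _ (by rw [hzmod]; push_cast [hzmod]; ring)
  have hneg : ∀ i : ZMod 8, pz (-i) = a ^ (-(i.val : ℤ)) := by
    intro i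
    exact hcast _ _ (by rw [hzmod]; push_cast [hzmod]; ring)
  have htpz : ∀ i : ZMod 8, t * pz i = pz (-i) * t := by
    intro i
    rw [hneg i]
    exact hta _
  set φ : DihedralGroup 8 → G := fun x =>
    match x with
    | DihedralGroup.r i => pz i
    | DihedralGroup.sr i => pz (-i) * t with hφ
  have hmul : ∀ x y : DihedralGroup 8, φ (x * y) = φ x * φ y := by
    rintro (i | i) (j | j)
    · show pz (i + j) = pz i * pz j
      exact hadd i j
    · show pz (-(j - i)) * t = pz i * (pz (-j) * t)
      rw [show -(j - i) = i + -j by ring, hadd]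
      group
    · show pz (-(i + j)) * t = (pz (-i) * t) * pz j
      rw [show -(i + j) = -i + -j by ring, hadd, mul_assoc, ← htpz, mul_assoc]
    · show pz (j - i) = (pz (-i) * t) * (pz (-j) * t)
      have : (pz (-i) * t) * (pz (-j) * t) = pz (-i) * (t * pz (-j)) * t := by group
      rw [this, htpz, neg_neg, show (j : ZMod 8) - i = -i + j by ring, hadd]
      calc pz (-i) * pz j = pz (-i) * pz j * (t * t) := by rw [hst, mul_one]
      _ = pz (-i) * (pz j * t) * t := by group
  set f : DihedralGroup 8 →* G := MonoidHom.mk' φ hmul with hfd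
  have hsurj : Function.Surjective f := by
    intro g
    by_cases hg : g ∈ Subgroup.zpowers a
    · obtain ⟨z, hz⟩ := hg
      simp only [] at hz
      refine ⟨DihedralGroup.r ((z : ZMod 8)), ?_⟩
      show pz ((z : ZMod 8)) = g
      rw [← hz, hpz]
      exact hcast _ _ (by rw [hzmod])
    · have htinv : t⁻¹ ∉ Subgroup.zpowers a := by simpa [inv_mem_iff] using ht
      have hmem : g * t⁻¹ ∈ Subgroup.zpowers a := by
        rw [Subgroup.mul_mem_iff_of_index_two hidx]
        tauto
      obtain ⟨z, hz⟩ := hmem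
      simp only [] at hz
      refine ⟨DihedralGroup.sr (-(z : ZMod 8)), ?_⟩
      show pz (-(-(z : ZMod 8))) * t = g
      rw [neg_neg]
      have : pz ((z : ZMod 8)) = a ^ z := hcast _ _ (by rw [hzmod])
      rw [this, hz]
      group
  have hbij : Function.Bijective f :=
    hsurj.bijective_of_nat_card_le (by rw [hcard, DihedralGroup.nat_card])
  exact ⟨(MulEquiv.ofBijective f hbij).symm⟩

end IsoD16

lemma cube_formula {G : Type*} [Group G] {a t : G} {k s : ℕ}
    (hk : t * a * t⁻¹ = a ^ k) (hs : t * t = a ^ s) (i : ℕ) :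
    (a ^ i * t) ^ (3:ℤ) = a ^ (i + k * (i + k * i + s)) * t := by
  have hx : ∀ x : G, x ^ (3:ℤ) = x * (x * x) := fun x => by
    rw [show (3:ℤ) = 1 + 1 + 1 by norm_num, zpow_add, zpow_add, zpow_one, mul_assoc]
  rw [hx, prod_formula hk hs i i, mix_formula hk i (i + k * i + s)]

lemma collision {G : Type*} [Group G] {a t : G} {k s M : ℕ} (horder : orderOf a = M)
    (hk : t * a * t⁻¹ = a ^ k) (hs : t * t = a ^ s) (i1 i2 : ℕ)
    (h1 : (i1 + k * (i1 + k * i1 + s)) % M = i2 % M)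
    (h2 : (i2 + k * (i2 + k * i2 + s)) % M = i1 % M) :
    Subgroup.zpowers (a ^ i1 * t) = Subgroup.zpowers (a ^ i2 * t) := by
  have key : ∀ j1 j2 : ℕ, (j1 + k * (j1 + k * j1 + s)) % M = j2 % M →
      a ^ j2 * t ∈ Subgroup.zpowers (a ^ j1 * t) := by
    intro j1 j2 h
    refine ⟨(3:ℤ), ?_⟩
    show (a ^ j1 * t) ^ (3:ℤ) = a ^ j2 * t
    rw [cube_formula hk hs j1]
    congr 1
    apply pow_eq_pow_iff_modEq.mpr
    rw [horder]
    exact h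
  exact le_antisymm (Subgroup.zpowers_le.mpr (key i2 i1 h2)) (Subgroup.zpowers_le.mpr (key i1 i2 h1))

lemma endgame8 {G : Type*} [Group G] [Finite G] {a t : G}
    (hidx : (Subgroup.zpowers a).index = 2) (horder : orderOf a = 8)
    (ht : t ∉ Subgroup.zpowers a)
    {k s i1 : ℕ} (hi1a : 2 ≤ i1) (hi1b : i1 < 8)
    (hk : t * a * t⁻¹ = a ^ k) (hs : t * t = a ^ s)
    (h1 : (1 + k * (1 + k * 1 + s)) % 8 = i1 % 8)
    (h2 : (i1 + k * (i1 + k * i1 + s)) % 8 = 1 % 8) :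
    Nat.card {K : Subgroup G // IsCyclic K} ≤ 11 := by
  have horder2 : orderOf a = 2 ^ 3 := by rw [horder]; norm_num
  have hcol := collision horder hk hs 1 i1 h1 h2
  have hcover : ∀ i : ℕ, i < 2 ^ 3 → ∃ x : Fin 7,
      Subgroup.zpowers (a ^ ((fun x : Fin 7 => if (x:ℕ) < i1 then (x:ℕ) else (x:ℕ)+1) x) * t)
        = Subgroup.zpowers (a ^ i * t) := by
    intro i hi
    norm_num at hi
    by_cases hii : i = i1
    · refine ⟨⟨1, by norm_num⟩, ?_⟩
      show Subgroup.zpowers (a ^ (if (1:ℕ) < i1 then (1:ℕ) else 1+1) * t) = _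
      rw [if_pos (by omega), hii]
      exact hcol
    · by_cases hlt : i < i1
      · refine ⟨⟨i, by omega⟩, ?_⟩
        show Subgroup.zpowers (a ^ (if i < i1 then i else i+1) * t) = _
        rw [if_pos hlt]
      · refine ⟨⟨i-1, by omega⟩, ?_⟩
        show Subgroup.zpowers (a ^ (if i-1 < i1 then i-1 else (i-1)+1) * t) = _
        rw [if_neg (by omega), show i-1+1 = i by omega]
  have hfin := count_le_general hidx horder2 ht _ hcover
  omega

lemma normalize_t {G : Type*} [Group G] {a t : G} {k s : ℕ} (e : ℕ)
    (hk : t * a * t⁻¹ = a ^ k) (hs : t * t = a ^ s) (horder : orderOf a = 8)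
    (hmod : (e + k * e + s) % 8 = 0) :
    (a ^ e * t) * a * (a ^ e * t)⁻¹ = a ^ k ∧ (a ^ e * t) * (a ^ e * t) = a ^ (0:ℕ) := by
  constructor
  · have h1 : (a ^ e * t) * a * (a ^ e * t)⁻¹ = a ^ e * (t * a * t⁻¹) * (a ^ e)⁻¹ := by group
    rw [h1, hk]
    group
  · rw [prod_formula hk hs e e]
    apply pow_eq_pow_iff_modEq.mpr
    rw [horder]
    show (e + k * e + s) % 8 = 0 % 8
    omega

/-- Among finite non-abelian 2-groups with a cyclic maximal subgroup (a cyclic subgroup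
of index 2), the dihedral group `D_16 = DihedralGroup 8` is the only one with `α = 3/4`. -/
theorem stmt_19 (G : Type*) [Group G] [Finite G] (n : ℕ) (hn : 3 ≤ n)
    (hcard : Nat.card G = 2 ^ n) (hnab : ∃ a b : G, a * b ≠ b * a)
    (hmax : ∃ H : Subgroup G, IsCyclic H ∧ H.index = 2) :
    alpha G = 3 / 4 ↔ Nonempty (G ≃* DihedralGroup 8) := by
  constructor
  · intro h34
    obtain ⟨H, hHcyc, hHidx⟩ := hmax
    obtain ⟨a, rfl⟩ := hHcyc.exists_gen'
    obtain ⟨p, rfl⟩ : ∃ p, n = p + 3 := ⟨n - 3, by omega⟩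
    have hcval : Nat.card {K : Subgroup G // IsCyclic K} = 6 * 2 ^ p := by
      have h1 : (Nat.card {K : Subgroup G // IsCyclic K} : ℚ) / ((2:ℚ) ^ (p+3)) = 3/4 := by
        unfold alpha at h34
        rw [hcard] at h34
        push_cast at h34 ⊢
        exact h34
      have h2 : (Nat.card {K : Subgroup G // IsCyclic K} : ℚ) = 6 * 2 ^ p := by
        field_simp at h1
        have hr : (3:ℚ) * 2 ^ (p+3) = (6 * 2 ^ p) * 4 := by ring
        linarith
      exact_mod_cast h2
    have hcardH : Nat.card (Subgroup.zpowers a) * 2 = 2 ^ (p+3) := by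
      calc Nat.card (Subgroup.zpowers a) * 2
          = Nat.card (Subgroup.zpowers a) * (Subgroup.zpowers a).index := by rw [hHidx]
        _ = Nat.card G := Subgroup.card_mul_index _
        _ = 2 ^ (p+3) := hcard
    have horder : orderOf a = 2 ^ (p+2) := by
      have h1 : Nat.card (Subgroup.zpowers a) = orderOf a := Nat.card_zpowers a
      have h2 : 2 ^ (p+3) = 2 ^ (p+2) * 2 := by ring
      omega
    obtain ⟨t, ht⟩ : ∃ t : G, t ∉ Subgroup.zpowers a := by
      by_contra h
      push_neg at h
      have : Subgroup.zpowers a = ⊤ := (Subgroup.eq_top_iff' _).mpr h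
      rw [this, Subgroup.index_top] at hHidx
      omega
    have hb := count_le_general hHidx horder ht (fun x : Fin (2 ^ (p+2)) => (x : ℕ))
      (fun i hi => ⟨⟨i, hi⟩, rfl⟩)
    have hple : p ≤ 1 := by
      by_contra hp2
      have h1 := aux_pow p (by omega)
      have h2 : 2 ^ (p + 2) = 4 * 2 ^ p := by ring
      omega
    have hM : a ^ (2 ^ (p+2) : ℕ) = 1 := by rw [← horder]; exact pow_orderOf_eq_one a
    have htinv : t⁻¹ ∉ Subgroup.zpowers a := by simpa [inv_mem_iff] using ht
    have hconjmem : t * a * t⁻¹ ∈ Subgroup.zpowers a := by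
      rw [Subgroup.mul_mem_iff_of_index_two hHidx, Subgroup.mul_mem_iff_of_index_two hHidx]
      have ha : a ∈ Subgroup.zpowers a := Subgroup.mem_zpowers a
      tauto
    obtain ⟨k, hkM, hk⟩ := mem_zpowers_rep hM (by positivity) hconjmem
    obtain ⟨s, hsM, hs⟩ := mem_zpowers_rep hM (by positivity)
      (Subgroup.mul_self_mem_of_index_two hHidx t)
    have hOk : orderOf (a ^ k) = 2 ^ (p+2) := by
      rw [← hk]
      have h2 := orderOf_injective (MulAut.conj t).toMonoidHom (MulEquiv.injective _) a
      simp only [MulEquiv.coe_toMonoidHom, MulAut.conj_apply] at h2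
      rw [h2, horder]
    have hscon : (k * s) % 2 ^ (p+2) = s % 2 ^ (p+2) := by
      have h1 : t * a ^ s * t⁻¹ = a ^ s := by
        rw [← hs]
        group
      have h2 : a ^ (k * s) = a ^ s := by
        have h3 := conj_pow_eq hk s
        calc a ^ (k * s) = (a ^ (k*s) * t) * t⁻¹ := by group
        _ = (t * a ^ s) * t⁻¹ := by rw [← h3]
        _ = a ^ s := h1
      have h4 := pow_eq_pow_iff_modEq.mp h2
      rwa [horder] at h4
    have hout_ne : ∀ i : ℕ, a ^ i * t ∉ Subgroup.zpowers a := by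
      intro i hmem
      apply ht
      have h1 : (a ^ i)⁻¹ * (a ^ i * t) ∈ Subgroup.zpowers a :=
        Subgroup.mul_mem _ (Subgroup.inv_mem _ (Subgroup.pow_mem _ (Subgroup.mem_zpowers a) i)) hmem
      rwa [show (a ^ i)⁻¹ * (a ^ i * t) = t by group] at h1
    interval_cases p
    · -- n = 3, |G| = 8
      norm_num at horder hM hkM hsM hscon hcval hb
      interval_cases k
      · rw [pow_zero, orderOf_one] at hOk
        norm_num at hOk
      · obtain ⟨x, y, hxy⟩ := hnab
        have hcomm : t * a = a * t := by
          have h5 := mul_inv_eq_iff_eq_mul.mp hk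
          rwa [pow_one] at h5
        exact absurd (abelian_contra hHidx ht hcomm x y) hxy
      · rw [orderOf_pow, horder] at hOk
        norm_num at hOk
      · -- k = 3
        have horder2 : orderOf a = 2 ^ 2 := by rw [horder]; norm_num
        interval_cases s
        · -- s = 0 : dihedral of order 8, at least 7 cyclic subgroups
          have hsq1 : ∀ i : ℕ, (a ^ i * t) * (a ^ i * t) = 1 := by
            intro i
            rw [prod_formula hk hs i i]
            have h6 : a ^ (i + 3 * i + 0) = a ^ (0:ℕ) := by
              apply pow_eq_pow_iff_modEq.mpr
              rw [horder]
              show (i + 3 * i + 0) % 4 = 0 % 4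
              omega
            rw [h6, pow_zero]
          have hne1 : ∀ i : ℕ, a ^ i * t ≠ 1 := by
            intro i h
            exact hout_ne i (h ▸ Subgroup.one_mem _)
          set g : Fin 3 ⊕ Fin 4 → {K : Subgroup G // IsCyclic K} := fun x =>
            match x with
            | .inl j => ⟨Subgroup.zpowers (a ^ (2 ^ (j:ℕ) : ℕ)), isCyclic_zpowers'_s19 _⟩
            | .inr i => ⟨Subgroup.zpowers (a ^ (i:ℕ) * t), isCyclic_zpowers'_s19 _⟩ with hg
          have hginj : Function.Injective g := by
            rintro (j | i) (j' | i') h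
            · have hcd := congrArg (fun K : {K : Subgroup G // IsCyclic K} => Nat.card K.1) h
              simp only [hg, Nat.card_zpowers, orderOf_pow, horder] at hcd
              fin_cases j <;> fin_cases j' <;> first | rfl | (exfalso; norm_num at hcd)
            · exfalso
              have hv : Subgroup.zpowers (a ^ (2 ^ (j:ℕ) : ℕ)) =
                  Subgroup.zpowers (a ^ (i':ℕ) * t) := congrArg Subtype.val h
              have hm : a ^ (i':ℕ) * t ∈ Subgroup.zpowers (a ^ (2 ^ (j:ℕ) : ℕ)) := by
                rw [hv]; exact Subgroup.mem_zpowers _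
              exact hout_ne (i':ℕ) (Subgroup.zpowers_le.mpr
                (Subgroup.pow_mem _ (Subgroup.mem_zpowers a) _) hm)
            · exfalso
              have hv : Subgroup.zpowers (a ^ (2 ^ (j':ℕ) : ℕ)) =
                  Subgroup.zpowers (a ^ (i:ℕ) * t) := (congrArg Subtype.val h).symm
              have hm : a ^ (i:ℕ) * t ∈ Subgroup.zpowers (a ^ (2 ^ (j':ℕ) : ℕ)) := by
                rw [hv]; exact Subgroup.mem_zpowers _
              exact hout_ne (i:ℕ) (Subgroup.zpowers_le.mpr
                (Subgroup.pow_mem _ (Subgroup.mem_zpowers a) _) hm)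
            · have hv : Subgroup.zpowers (a ^ (i:ℕ) * t) =
                  Subgroup.zpowers (a ^ (i':ℕ) * t) := congrArg Subtype.val h
              have hm : a ^ (i:ℕ) * t ∈ Subgroup.zpowers (a ^ (i':ℕ) * t) := by
                rw [← hv]; exact Subgroup.mem_zpowers _
              rcases mem_zpowers_sq (hsq1 (i':ℕ)) hm with h1 | h1
              · exact absurd h1 (hne1 _)
              · have h2 : a ^ (i:ℕ) = a ^ (i':ℕ) := mul_right_cancel h1
                have h3 := pow_eq_pow_iff_modEq.mp h2
                rw [horder] at h3
                have h4 : (i:ℕ) = (i':ℕ) := by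
                  have hi := i.isLt
                  have hi' := i'.isLt
                  simpa [Nat.ModEq, Nat.mod_eq_of_lt hi, Nat.mod_eq_of_lt hi'] using h3
                exact congrArg Sum.inr (Fin.ext h4)
          have h7 := Nat.card_le_card_of_injective g hginj
          simp only [Nat.card_eq_fintype_card, Fintype.card_sum, Fintype.card_fin] at h7
          omega
        · norm_num at hscon
        · -- s = 2 : quaternion of order 8, at most 5 cyclic subgroups
          have hcol1 := collision horder hk hs 0 2 (by norm_num) (by norm_num)
          have hcol2 := collision horder hk hs 1 3 (by norm_num) (by norm_num)
          have hcover : ∀ i : ℕ, i < 2 ^ 2 → ∃ x : Fin 2,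
              Subgroup.zpowers (a ^ (x:ℕ) * t) = Subgroup.zpowers (a ^ i * t) := by
            intro i hi
            norm_num at hi
            interval_cases i
            · exact ⟨⟨0, by norm_num⟩, rfl⟩
            · exact ⟨⟨1, by norm_num⟩, rfl⟩
            · exact ⟨⟨0, by norm_num⟩, hcol1⟩
            · exact ⟨⟨1, by norm_num⟩, hcol2⟩
          have hb2 := count_le_general hHidx horder2 ht (fun x : Fin 2 => (x:ℕ)) hcover
          omega
        · norm_num at hscon
    · -- n = 4, |G| = 16
      norm_num at horder hM hkM hsM hscon hcval hb hcard
      interval_cases k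
      · rw [pow_zero, orderOf_one] at hOk
        norm_num at hOk
      · obtain ⟨x, y, hxy⟩ := hnab
        have hcomm : t * a = a * t := by
          have h5 := mul_inv_eq_iff_eq_mul.mp hk
          rwa [pow_one] at h5
        exact absurd (abelian_contra hHidx ht hcomm x y) hxy
      · rw [orderOf_pow, horder] at hOk
        norm_num at hOk
      · -- k = 3, semidihedral type
        interval_cases s
        · have h11 := endgame8 hHidx horder ht (i1 := 5) (by norm_num) (by norm_num) hk hs
            (by norm_num) (by norm_num)
          exfalso; omega
        · norm_num at hscon
        · norm_num at hscon
        · norm_num at hscon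
        · obtain ⟨hk', hs'⟩ := normalize_t 1 hk hs horder (by norm_num)
          have h11 := endgame8 hHidx horder (hout_ne 1) (i1 := 5) (by norm_num) (by norm_num)
            hk' hs' (by norm_num) (by norm_num)
          exfalso; omega
        · norm_num at hscon
        · norm_num at hscon
        · norm_num at hscon
      · rw [orderOf_pow, horder] at hOk
        norm_num at hOk
      · -- k = 5, modular type
        interval_cases s
        · have h11 := endgame8 hHidx horder ht (i1 := 7) (by norm_num) (by norm_num) hk hs
            (by norm_num) (by norm_num)
          exfalso; omega
        · norm_num at hscon
        · obtain ⟨hk', hs'⟩ := normalize_t 1 hk hs horder (by norm_num)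
          have h11 := endgame8 hHidx horder (hout_ne 1) (i1 := 7) (by norm_num) (by norm_num)
            hk' hs' (by norm_num) (by norm_num)
          exfalso; omega
        · norm_num at hscon
        · obtain ⟨hk', hs'⟩ := normalize_t 2 hk hs horder (by norm_num)
          have h11 := endgame8 hHidx horder (hout_ne 2) (i1 := 7) (by norm_num) (by norm_num)
            hk' hs' (by norm_num) (by norm_num)
          exfalso; omega
        · norm_num at hscon
        · obtain ⟨hk', hs'⟩ := normalize_t 3 hk hs horder (by norm_num)
          have h11 := endgame8 hHidx horder (hout_ne 3) (i1 := 7) (by norm_num) (by norm_num)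
            hk' hs' (by norm_num) (by norm_num)
          exfalso; omega
        · norm_num at hscon
      · rw [orderOf_pow, horder] at hOk
        norm_num at hOk
      · -- k = 7, dihedral or quaternion type
        interval_cases s
        · -- s = 0 : dihedral, the good case
          have hst : t * t = 1 := by simpa using hs
          exact iso_D16 hcard hHidx horder ht hk hst
        · norm_num at hscon
        · norm_num at hscon
        · norm_num at hscon
        · -- s = 4 : quaternion
          have h11 := endgame8 hHidx horder ht (i1 := 5) (by norm_num) (by norm_num) hk hs
            (by norm_num) (by norm_num)
          exfalso; omega
        · norm_num at hscon
        · norm_num at hscon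
        · norm_num at hscon
  · rintro ⟨e⟩
    rw [alpha_congr e]
    exact alpha_D16
end
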